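/- Assume the kernel matrix K = (exp(−c_{ij}/2))_{i,j} is positive definite. Then for every f ∈ ℝ^d the function α ↦ ⟨α, f⟩ − Ω_C(α) has a unique maximizer over △^d, the function α ↦ Φ_C(α, f) has a unique minimizer over △^d, and these two points of △^d coincide (this common point is the geometric softmax g-softmax(f)). -/

import Mathlib

open Finset Real Filter

noncomputable section

/-- The probability simplex in `ℝ^d`. -/
def simplexS (d : ℕ) : Set (Fin d → ℝ) := stdSimplex ℝ (Fin d)

/-- Transport plans between `α` and `β`: nonnegative matrices with prescribed marginals,
supported where `α i * β j > 0`. -/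
def couplings {d : ℕ} (α β : Fin d → ℝ) : Set (Matrix (Fin d) (Fin d) ℝ) :=
  {p | (∀ i j, 0 ≤ p i j) ∧ (∀ i, ∑ j, p i j = α i) ∧ (∀ j, ∑ i, p i j = β j) ∧
    ∀ i j, α i * β j = 0 → p i j = 0}

/-- The entropy-regularized transport cost of a plan `p` (with the convention `0 log 0 = 0`,
which holds automatically since `Real.log 0 = 0`). -/
def OTcost {d : ℕ} (C : Matrix (Fin d) (Fin d) ℝ) (ε : ℝ) (α β : Fin d → ℝ)
    (p : Matrix (Fin d) (Fin d) ℝ) : ℝ :=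
  (∑ i, ∑ j, p i j * C i j) + ε * ∑ i, ∑ j, p i j * Real.log (p i j / (α i * β j))

/-- Entropy-regularized optimal transport cost `OT_{C,ε}(α,β)`. -/
def OT {d : ℕ} (C : Matrix (Fin d) (Fin d) ℝ) (ε : ℝ) (α β : Fin d → ℝ) : ℝ :=
  sInf (OTcost C ε α β '' couplings α β)

/-- The Sinkhorn negentropy `Ω_C(α) = -(1/2) OT_{C,2}(α,α)`. -/
def Omega {d : ℕ} (C : Matrix (Fin d) (Fin d) ℝ) (α : Fin d → ℝ) : ℝ :=
  -(1 / 2) * OT C 2 α α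

open scoped Classical

/-- `Φ_C(α,f) = Σ_{i,j} α_i α_j exp(-(f_i + f_j + c_{ij})/2)`. -/
def Phi {d : ℕ} (C : Matrix (Fin d) (Fin d) ℝ) (α f : Fin d → ℝ) : ℝ :=
  ∑ i, ∑ j, α i * α j * Real.exp (-(f i + f j + C i j) / 2)

/-- The geometric log-sum-exp `Ω_C^*(f) = -log min_{α ∈ △^d} Φ_C(α, f)`. -/
def OmegaStar {d : ℕ} (C : Matrix (Fin d) (Fin d) ℝ) (f : Fin d → ℝ) : ℝ :=
  -Real.log (sInf ((fun α => Phi C α f) '' simplexS d))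

/-- The geometric softmax: the (unique, when the kernel is positive definite) minimizer of
`Φ_C(·, f)` over the simplex. -/
def gsoftmax {d : ℕ} (C : Matrix (Fin d) (Fin d) ℝ) (f : Fin d → ℝ) : Fin d → ℝ :=
  if h : ∃ α ∈ simplexS d, IsMinOn (fun β => Phi C β f) (simplexS d) α
  then h.choose else fun _ => 0

/-- The soft C-transform `T(f,α)_i = -2 log Σ_j α_j exp((f_j - c_{ij})/2)`. -/
def Tsoft {d : ℕ} (C : Matrix (Fin d) (Fin d) ℝ) (f α : Fin d → ℝ) : Fin d → ℝ :=
  fun i => -2 * Real.log (∑ j, α j * Real.exp ((f j - C i j) / 2))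

/-- `f` is the symmetric Sinkhorn potential of `α`: `-f = T(-f, α)`. -/
def IsSinkhornPotential {d : ℕ} (C : Matrix (Fin d) (Fin d) ℝ) (α f : Fin d → ℝ) : Prop :=
  -f = Tsoft C (-f) α

/-- The symmetric Sinkhorn potential `∇Ω(α)`: the (unique, when the kernel is positive
definite) `f` with `-f = T(-f, α)`. -/
def gradOmega {d : ℕ} (C : Matrix (Fin d) (Fin d) ℝ) (α : Fin d → ℝ) : Fin d → ℝ :=
  if h : ∃ f : Fin d → ℝ, IsSinkhornPotential C α f then h.choose else fun _ => 0

/-- The extrapolation `f^E = -T(-(f - Ω_C^*(f)·1), g-softmax(f)) + Ω_C^*(f)·1`. -/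
def extrap {d : ℕ} (C : Matrix (Fin d) (Fin d) ℝ) (f : Fin d → ℝ) : Fin d → ℝ :=
  fun i => -(Tsoft C (fun j => -(f j - OmegaStar C f)) (gsoftmax C f) i) + OmegaStar C f

/-- The kernel matrix `K = (exp(-c_{ij}/2))_{ij}`. -/
def kernelK {d : ℕ} (C : Matrix (Fin d) (Fin d) ℝ) : Matrix (Fin d) (Fin d) ℝ :=
  Matrix.of fun i j => Real.exp (-(C i j) / 2)


open Matrix Topology

def QF {d : ℕ} (C : Matrix (Fin d) (Fin d) ℝ) (x : Fin d → ℝ) : ℝ :=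
  ∑ i, ∑ j, x i * x j * Real.exp (-(C i j) / 2)

def auxG {d : ℕ} (C : Matrix (Fin d) (Fin d) ℝ) (β v : Fin d → ℝ) : ℝ :=
  Real.log (QF C (fun i => β i * v i)) - 2 * ∑ i, β i * Real.log (v i)

lemma qf_pos {d : ℕ} {C : Matrix (Fin d) (Fin d) ℝ} (hK : (kernelK C).PosDef)
    {x : Fin d → ℝ} (hx : x ≠ 0) : 0 < QF C x := by
  have h := hK.dotProduct_mulVec_pos hx
  simp only [star_trivial] at h
  calc (0:ℝ) < dotProduct x (kernelK C *ᵥ x) := h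
    _ = QF C x := by
        unfold QF
        simp only [dotProduct, Matrix.mulVec, kernelK, Matrix.of_apply, Finset.mul_sum]
        refine Finset.sum_congr rfl fun i _ => Finset.sum_congr rfl fun j _ => by ring

lemma phi_eq_qf {d : ℕ} (C : Matrix (Fin d) (Fin d) ℝ) (α f : Fin d → ℝ) :
    Phi C α f = QF C (fun i => α i * Real.exp (-(f i) / 2)) := by
  unfold Phi QF
  refine Finset.sum_congr rfl fun i _ => Finset.sum_congr rfl fun j _ => ?_
  rw [show -(f i + f j + C i j) / 2 = -(f i)/2 + (-(f j)/2 + -(C i j)/2) by ring,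
    Real.exp_add, Real.exp_add]
  ring

lemma simplex_exists_pos {d : ℕ} {β : Fin d → ℝ} (hβ : β ∈ simplexS d) : ∃ i, 0 < β i := by
  by_contra h
  push_neg at h
  have : ∀ i ∈ Finset.univ, β i = 0 := fun i _ => le_antisymm (h i) (hβ.1 i)
  have := hβ.2
  rw [Finset.sum_eq_zero ‹∀ i ∈ Finset.univ, β i = 0›] at this
  norm_num at this

lemma phi_pos {d : ℕ} {C : Matrix (Fin d) (Fin d) ℝ} (hK : (kernelK C).PosDef)
    {β : Fin d → ℝ} (hβ : β ∈ simplexS d) (f : Fin d → ℝ) : 0 < Phi C β f := by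
  obtain ⟨i0, hi0⟩ := simplex_exists_pos hβ
  rw [phi_eq_qf]
  apply qf_pos hK
  intro h
  have := congrFun h i0
  simp only [Pi.zero_apply] at this
  exact absurd this (by positivity)

lemma qf_combine {d : ℕ} (C : Matrix (Fin d) (Fin d) ℝ) (x y : Fin d → ℝ) :
    QF C x + QF C y = 2 * QF C (fun i => (x i + y i)/2) + (1/2) * QF C (fun i => x i - y i) := by
  simp only [QF, Finset.mul_sum, ← Finset.sum_add_distrib]
  exact Finset.sum_congr rfl fun i _ => Finset.sum_congr rfl fun j _ => by ring

lemma phi_min_unique {d : ℕ} {C : Matrix (Fin d) (Fin d) ℝ} (hK : (kernelK C).PosDef)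
    (f : Fin d → ℝ) {a b : Fin d → ℝ} (ha : a ∈ simplexS d) (hb : b ∈ simplexS d)
    (hma : IsMinOn (fun β => Phi C β f) (simplexS d) a)
    (hmb : IsMinOn (fun β => Phi C β f) (simplexS d) b) : a = b := by
  by_contra hne
  set c : Fin d → ℝ := fun i => (a i + b i)/2 with hc
  have hcmem : c ∈ simplexS d := by
    constructor
    · intro i; have := ha.1 i; have := hb.1 i; simp only [hc]; positivity
    · simp only [hc, ← Finset.sum_div, Finset.sum_add_distrib, ha.2, hb.2]; norm_num
  have hz : (fun i => a i * Real.exp (-(f i)/2) - b i * Real.exp (-(f i)/2)) ≠ 0 := by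
    intro h
    apply hne
    funext i
    have := congrFun h i
    simp only [Pi.zero_apply, sub_eq_zero] at this
    exact mul_right_cancel₀ (Real.exp_ne_zero _) this
  have hzpos := qf_pos hK hz
  have hiden : Phi C a f + Phi C b f =
      2 * Phi C c f + (1/2) * QF C (fun i => a i * Real.exp (-(f i)/2) - b i * Real.exp (-(f i)/2)) := by
    rw [phi_eq_qf C a f, phi_eq_qf C b f, phi_eq_qf C c f]
    have hfun : (fun i => c i * Real.exp (-(f i)/2))
        = fun i => (a i * Real.exp (-(f i)/2) + b i * Real.exp (-(f i)/2))/2 := by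
      funext i; simp only [hc]; ring
    rw [hfun]
    exact qf_combine C (fun i => a i * Real.exp (-(f i)/2)) (fun i => b i * Real.exp (-(f i)/2))
  have h1 : Phi C a f ≤ Phi C c f := hma hcmem
  have h2 : Phi C b f ≤ Phi C c f := hmb hcmem
  linarith

lemma phi_min_exists {d : ℕ} (hd : 1 ≤ d) (C : Matrix (Fin d) (Fin d) ℝ) (f : Fin d → ℝ) :
    ∃ α ∈ simplexS d, IsMinOn (fun β => Phi C β f) (simplexS d) α := by
  have hne : (simplexS d).Nonempty := ⟨Pi.single ⟨0, hd⟩ 1, single_mem_stdSimplex ℝ _⟩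
  have hcont : Continuous fun β : Fin d → ℝ => Phi C β f :=
    continuous_finset_sum _ fun i _ => continuous_finset_sum _ fun j _ =>
      ((continuous_apply i).mul (continuous_apply j)).mul continuous_const
  obtain ⟨α, hα, hmin⟩ := (isCompact_stdSimplex ℝ (Fin d)).exists_isMinOn hne hcont.continuousOn
  exact ⟨α, hα, hmin⟩

lemma qf_diag_le {d : ℕ} (C : Matrix (Fin d) (Fin d) ℝ) (hCdiag : ∀ i, C i i = 0)
    {y : Fin d → ℝ} (hy : ∀ i, 0 ≤ y i) (i : Fin d) : y i ^ 2 ≤ QF C y := by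
  unfold QF
  have h1 : y i * y i * Real.exp (-(C i i)/2) ≤ ∑ l, y i * y l * Real.exp (-(C i l)/2) :=
    Finset.single_le_sum (f := fun l => y i * y l * Real.exp (-(C i l)/2))
      (fun l _ => by have := hy i; have := hy l; positivity) (Finset.mem_univ i)
  have h2 : (∑ l, y i * y l * Real.exp (-(C i l)/2))
      ≤ ∑ j, ∑ l, y j * y l * Real.exp (-(C j l)/2) :=
    Finset.single_le_sum (f := fun j => ∑ l, y j * y l * Real.exp (-(C j l)/2))
      (fun j _ => Finset.sum_nonneg fun l _ => by have := hy j; have := hy l; positivity)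
      (Finset.mem_univ i)
  rw [hCdiag i] at h1
  simp only [neg_zero, zero_div, Real.exp_zero, mul_one] at h1
  nlinarith

set_option maxHeartbeats 1600000 in
lemma exists_stationary {d : ℕ} {C : Matrix (Fin d) (Fin d) ℝ} (hCsym : C.IsSymm)
    (hCdiag : ∀ i, C i i = 0) {β : Fin d → ℝ} (hβ : β ∈ simplexS d) :
    ∃ v : Fin d → ℝ, (∀ i, 0 < v i) ∧
      ∀ i, β i * v i * (∑ j, β j * v j * Real.exp (-(C i j)/2)) =
        β i * QF C (fun l => β l * v l) := by
  classical
  obtain ⟨i0, hi0⟩ := simplex_exists_pos hβ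
  have hk : ∀ i j, Real.exp (-(C i j)/2) = Real.exp (-(C j i)/2) := fun i j => by
    rw [hCsym.apply j i]
  have hQpos : ∀ v : Fin d → ℝ, (∀ i, 0 < v i) → 0 < QF C (fun l => β l * v l) := by
    intro v hv
    have h := qf_diag_le C hCdiag (y := fun l => β l * v l)
      (fun l => mul_nonneg (hβ.1 l) (hv l).le) i0
    have : 0 < (β i0 * v i0) ^ 2 := by have := hv i0; positivity
    linarith
  -- the support set and its minimum
  set S : Finset (Fin d) := Finset.univ.filter (fun i => 0 < β i) with hSdef
  have hi0S : i0 ∈ S := Finset.mem_filter.mpr ⟨Finset.mem_univ _, hi0⟩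
  have hSne : S.Nonempty := ⟨i0, hi0S⟩
  set m0 := S.inf' hSne β with hm0
  have hm0pos : 0 < m0 := (Finset.lt_inf'_iff hSne).mpr fun i hi => (Finset.mem_filter.mp hi).2
  have hm0le : ∀ i, 0 < β i → m0 ≤ β i := fun i hi =>
    Finset.inf'_le β (Finset.mem_filter.mpr ⟨Finset.mem_univ _, hi⟩)
  set G1 := auxG C β (fun _ => 1) with hG1
  set c' := max (G1 + 1 - 2 * Real.log m0) 0 with hc'
  have hc'0 : 0 ≤ c' := le_max_right _ _
  set δ0 := min (1/2 : ℝ) (Real.exp (-(c' / (2 * m0)))) with hδ0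
  have hδ0pos : 0 < δ0 := lt_min (by norm_num) (Real.exp_pos _)
  have hδ0le : δ0 ≤ 1 := le_trans (min_le_left _ _) (by norm_num)
  have hδ0log : Real.log δ0 ≤ -(c' / (2 * m0)) := by
    calc Real.log δ0 ≤ Real.log (Real.exp (-(c' / (2 * m0)))) :=
          Real.log_le_log hδ0pos (min_le_right _ _)
      _ = -(c' / (2 * m0)) := Real.log_exp _
  -- the box
  set box : Set (Fin d → ℝ) := {x | ∀ i, δ0 ≤ x i ∧ x i ≤ 1} with hboxdef
  have hboxIcc : box = Set.Icc (fun _ => δ0) (fun _ => (1:ℝ)) := by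
    ext x
    simp only [hboxdef, Set.mem_setOf_eq, Set.mem_Icc, Pi.le_def]
    exact ⟨fun h => ⟨fun i => (h i).1, fun i => (h i).2⟩, fun h i => ⟨h.1 i, h.2 i⟩⟩
  have hboxcompact : IsCompact box := hboxIcc ▸ isCompact_Icc
  have honemem : (fun _ => (1:ℝ)) ∈ box := fun i => ⟨hδ0le, le_refl _⟩
  have hcontQ : Continuous fun v : Fin d → ℝ => QF C (fun l => β l * v l) :=
    continuous_finset_sum _ fun i _ => continuous_finset_sum _ fun j _ =>
      ((continuous_const.mul (continuous_apply i)).mul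
        (continuous_const.mul (continuous_apply j))).mul continuous_const
  have hmem_box : ∀ {x : Fin d → ℝ}, x ∈ box → ∀ i, δ0 ≤ x i ∧ x i ≤ 1 := fun hx => hx
  have hcont : ContinuousOn (auxG C β) box := by
    have hsum : ContinuousOn (fun v : Fin d → ℝ => ∑ i, β i * Real.log (v i)) box :=
      continuousOn_finset_sum _ fun i _ => continuousOn_const.mul
        (((continuous_apply i).continuousOn).log fun x hx =>
          (lt_of_lt_of_le hδ0pos ((hmem_box hx) i).1).ne')
    exact ContinuousOn.sub (hcontQ.continuousOn.log fun x hx =>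
      (hQpos x fun i => lt_of_lt_of_le hδ0pos ((hmem_box hx) i).1).ne')
      (continuousOn_const.mul hsum)
  obtain ⟨v, hvbox, hvmin⟩ := hboxcompact.exists_isMinOn ⟨_, honemem⟩ hcont
  have hvpos : ∀ i, 0 < v i := fun i => lt_of_lt_of_le hδ0pos (hvbox i).1
  -- global minimality
  have hglobal : ∀ x : Fin d → ℝ, (∀ i, 0 < x i) → auxG C β v ≤ auxG C β x := by
    intro x hx
    obtain ⟨i1, hi1S, hi1max⟩ := S.exists_max_image x hSne
    have hβi1 : 0 < β i1 := (Finset.mem_filter.mp hi1S).2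
    set c := x i1 with hcdef
    have hcpos : 0 < c := hx i1
    set w : Fin d → ℝ := fun i => if 0 < β i then x i / c else 1 with hwdef
    have hwpos : ∀ i, 0 < w i := by
      intro i
      by_cases hbi : 0 < β i
      · simp only [hwdef, if_pos hbi]; exact div_pos (hx i) hcpos
      · simp only [hwdef, if_neg hbi]; norm_num
    have hwle : ∀ i, 0 < β i → w i ≤ 1 := by
      intro i hbi
      simp only [hwdef, if_pos hbi]
      rw [div_le_one hcpos]
      exact hi1max i (Finset.mem_filter.mpr ⟨Finset.mem_univ _, hbi⟩)
    have hβ0 : ∀ i, ¬ 0 < β i → β i = 0 := fun i hbi => le_antisymm (not_lt.1 hbi) (hβ.1 i)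
    have hβw : ∀ i, β i * w i = β i * x i / c := by
      intro i
      by_cases hbi : 0 < β i
      · simp only [hwdef, if_pos hbi]; ring
      · simp [hwdef, if_neg hbi, hβ0 i hbi]
    have hQw : QF C (fun l => β l * w l) = QF C (fun l => β l * x l) / c^2 := by
      unfold QF
      rw [Finset.sum_div]
      refine Finset.sum_congr rfl fun i _ => ?_
      rw [Finset.sum_div]
      refine Finset.sum_congr rfl fun j _ => ?_
      dsimp only
      rw [hβw i, hβw j]
      ring
    have hsumw : ∑ i, β i * Real.log (w i) = (∑ i, β i * Real.log (x i)) - Real.log c := by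
      have e : ∀ i, β i * Real.log (w i) = β i * Real.log (x i) - β i * Real.log c := by
        intro i
        by_cases hbi : 0 < β i
        · simp only [hwdef, if_pos hbi]
          rw [Real.log_div (hx i).ne' hcpos.ne']
          ring
        · simp [hβ0 i hbi]
      simp only [e, Finset.sum_sub_distrib, ← Finset.sum_mul, hβ.2, one_mul]
    have hGw : auxG C β w = auxG C β x := by
      unfold auxG
      rw [hQw, hsumw, Real.log_div (hQpos x hx).ne' (pow_ne_zero 2 hcpos.ne'), Real.log_pow]
      push_cast
      ring
    by_cases hcase : ∀ i, δ0 ≤ w i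
    · have hwbox : w ∈ box := by
        intro i
        refine ⟨hcase i, ?_⟩
        by_cases hbi : 0 < β i
        · exact hwle i hbi
        · simp [hwdef, if_neg hbi]
      calc auxG C β v ≤ auxG C β w := hvmin hwbox
        _ = auxG C β x := hGw
    · push_neg at hcase
      obtain ⟨i2, hi2⟩ := hcase
      have hβi2 : 0 < β i2 := by
        by_contra hbi
        have : w i2 = 1 := by simp [hwdef, if_neg hbi]
        rw [this] at hi2
        linarith
      have hwi1 : w i1 = 1 := by
        simp only [hwdef, if_pos hβi1]
        exact div_self hcpos.ne'
      have hQlb : 2 * Real.log m0 ≤ Real.log (QF C (fun l => β l * w l)) := by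
        have h1 : (β i1 * w i1) ^ 2 ≤ QF C (fun l => β l * w l) :=
          qf_diag_le C hCdiag (fun l => mul_nonneg (hβ.1 l) (hwpos l).le) i1
        rw [hwi1, mul_one] at h1
        have h2 : m0 ^ 2 ≤ QF C (fun l => β l * w l) := by
          have := hm0le i1 hβi1
          nlinarith
        calc 2 * Real.log m0 = Real.log (m0 ^ 2) := by
              rw [Real.log_pow]; push_cast; ring
          _ ≤ Real.log (QF C (fun l => β l * w l)) :=
              Real.log_le_log (by positivity) h2
      have hsum_le : ∑ i, β i * Real.log (w i) ≤ β i2 * Real.log (w i2) := by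
        have hterm : ∀ i, β i * Real.log (w i) ≤ 0 := by
          intro i
          by_cases hbi : 0 < β i
          · have hl := Real.log_nonpos (hwpos i).le (hwle i hbi)
            nlinarith [hβ.1 i]
          · simp [hβ0 i hbi]
        have h := Finset.single_le_sum (f := fun i => -(β i * Real.log (w i)))
          (fun i _ => neg_nonneg.2 (hterm i)) (Finset.mem_univ i2)
        simp only [Finset.sum_neg_distrib] at h
        linarith
      have hlogw : Real.log (w i2) ≤ Real.log δ0 :=
        Real.log_le_log (hwpos i2) hi2.le
      have hkey : c' ≤ -2 * (β i2 * Real.log δ0) := by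
        have h1 : β i2 * Real.log δ0 ≤ β i2 * (-(c' / (2 * m0))) :=
          mul_le_mul_of_nonneg_left hδ0log (hβ.1 i2)
        have h2 : m0 ≤ β i2 := hm0le i2 hβi2
        have h3 : m0 * (c' / (2 * m0)) ≤ β i2 * (c' / (2 * m0)) :=
          mul_le_mul_of_nonneg_right h2 (by positivity)
        have h4 : m0 * (c' / (2 * m0)) = c' / 2 := by field_simp
        nlinarith
      have hGx : G1 + 1 ≤ auxG C β x := by
        rw [← hGw]
        unfold auxG
        have h5 : -2 * (β i2 * Real.log (w i2)) ≥ -2 * (β i2 * Real.log δ0) := by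
          nlinarith [mul_le_mul_of_nonneg_left hlogw (hβ.1 i2)]
        have h6 : G1 + 1 - 2 * Real.log m0 ≤ c' := le_max_left _ _
        nlinarith [hsum_le, hQlb]
      have hv1 : auxG C β v ≤ G1 := hvmin honemem
      linarith
  -- stationarity
  refine ⟨v, hvpos, fun i => ?_⟩
  by_cases hbi : 0 < β i
  swap
  · have h0 : β i = 0 := le_antisymm (not_lt.1 hbi) (hβ.1 i)
    simp [h0]
  · set A := QF C (fun l => β l * v l) with hA
    have hApos : 0 < A := hQpos v hvpos
    set cc : Fin d → ℝ := fun j => if j = i then (1:ℝ) else 0 with hcc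
    set B := 2 * β i * ∑ l, β l * v l * Real.exp (-(C i l)/2) with hB
    set φ : ℝ → ℝ := fun t => auxG C β (fun j => v j + cc j * t) with hφ
    have hφ0 : φ 0 = auxG C β v := by
      simp only [hφ, mul_zero, add_zero]
    have hloc : IsLocalMin φ 0 := by
      have hball : Metric.ball (0:ℝ) (v i) ∈ 𝓝 (0:ℝ) := Metric.ball_mem_nhds _ (hvpos i)
      filter_upwards [hball] with t ht
      rw [hφ0]
      apply hglobal
      intro j
      by_cases hj : j = i
      · subst hj
        simp only [hcc, if_pos rfl, one_mul]
        rw [Metric.mem_ball, Real.dist_eq, sub_zero] at ht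
        have := abs_lt.1 ht
        linarith
      · simp only [hcc, if_neg hj, zero_mul, add_zero]
        exact hvpos j
    have hlin : ∀ (a b : ℝ), HasDerivAt (fun t : ℝ => a + b * t) b 0 := by
      intro a b
      simpa using ((hasDerivAt_id (0:ℝ)).const_mul b).const_add a
    have hQder : HasDerivAt (fun t => QF C (fun l => β l * (v l + cc l * t)))
        (∑ j, ∑ l, (β j * cc j * (β l * v l) + β j * v j * (β l * cc l))
          * Real.exp (-(C j l)/2)) 0 := by
      unfold QF
      apply HasDerivAt.fun_sum
      intro j _
      apply HasDerivAt.fun_sum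
      intro l _
      have h1 : HasDerivAt (fun t : ℝ => β j * (v j + cc j * t)) (β j * cc j) 0 := by
        have := (hlin (v j) (cc j)).const_mul (β j)
        simpa using this
      have h2 : HasDerivAt (fun t : ℝ => β l * (v l + cc l * t)) (β l * cc l) 0 := by
        have := (hlin (v l) (cc l)).const_mul (β l)
        simpa using this
      have h3 := (h1.fun_mul h2).mul_const (Real.exp (-(C j l)/2))
      exact h3.congr_deriv (by norm_num)
    have hderval : (∑ j, ∑ l, (β j * cc j * (β l * v l) + β j * v j * (β l * cc l))
        * Real.exp (-(C j l)/2)) = B := by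
      have e : ∀ j l, (β j * cc j * (β l * v l) + β j * v j * (β l * cc l))
          * Real.exp (-(C j l)/2)
          = (if j = i then β i * (β l * v l) * Real.exp (-(C i l)/2) else 0)
            + (if l = i then β j * v j * β i * Real.exp (-(C j i)/2) else 0) := by
        intro j l
        by_cases hj : j = i <;> by_cases hl : l = i <;> simp [hcc, hj, hl] <;> ring
      simp only [e, Finset.sum_add_distrib]
      rw [Finset.sum_comm (f := fun j l => if j = i then β i * (β l * v l)
        * Real.exp (-(C i l)/2) else 0)]
      simp only [Finset.sum_ite_eq, Finset.sum_ite_eq', Finset.mem_univ, if_true]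
      have e2 : ∀ j, β j * v j * β i * Real.exp (-(C j i)/2)
          = β i * (β j * v j * Real.exp (-(C i j)/2)) := by
        intro j
        rw [hk j i]
        ring
      simp only [e2]
      rw [hB, ← Finset.sum_add_distrib, Finset.mul_sum]
      refine Finset.sum_congr rfl fun l _ => ?_
      ring
    have hQ0 : (fun l => β l * (v l + cc l * 0)) = fun l => β l * v l := by
      funext l; simp
    have hlogder : HasDerivAt (fun t => Real.log (QF C (fun l => β l * (v l + cc l * t))))
        (B / A) 0 := by
      have h := hQder.log (by rw [hQ0]; exact hApos.ne')
      rw [hderval] at h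
      convert h using 2
      rw [hQ0]
    have hsumder : HasDerivAt (fun t => ∑ j, β j * Real.log (v j + cc j * t)) (β i / v i) 0 := by
      have h : ∀ j ∈ Finset.univ, HasDerivAt (fun t => β j * Real.log (v j + cc j * t))
          (β j * (cc j / (v j + cc j * 0))) 0 := by
        intro j _
        exact ((hlin (v j) (cc j)).log (by simpa using (hvpos j).ne')).const_mul (β j)
      have h2 := HasDerivAt.fun_sum h
      have e2 : ∑ j, β j * (cc j / (v j + cc j * 0)) = β i / v i := by
        have e3 : ∀ j, β j * (cc j / (v j + cc j * 0)) = if j = i then β i / v i else 0 := by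
          intro j
          by_cases hj : j = i
          · subst hj; simp [hcc, mul_one_div, div_eq_mul_inv]
          · simp [hcc, hj]
        simp only [e3, Finset.sum_ite_eq', Finset.mem_univ, if_true]
      rw [e2] at h2
      exact h2
    have hφder : HasDerivAt φ (B / A - 2 * (β i / v i)) 0 := by
      have h := hlogder.sub (hsumder.const_mul 2)
      exact h
    have h0 := hloc.hasDerivAt_eq_zero hφder
    have hv := (hvpos i).ne'
    have h1 : B * v i = 2 * β i * A := by
      have h2 : B / A = 2 * (β i / v i) := by linarith
      field_simp at h2
      linarith
    rw [hB] at h1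
    nlinarith [h1]

lemma couplings_prod {d : ℕ} {β : Fin d → ℝ} (hβ : β ∈ simplexS d) :
    (Matrix.of fun i j => β i * β j) ∈ couplings β β := by
  refine ⟨fun i j => mul_nonneg (hβ.1 i) (hβ.1 j), fun i => ?_, fun j => ?_, fun i j h => h⟩
  · simp only [Matrix.of_apply, ← Finset.mul_sum, hβ.2, mul_one]
  · simp only [Matrix.of_apply, ← Finset.sum_mul, hβ.2, one_mul]

lemma otcost_lower {d : ℕ} (C : Matrix (Fin d) (Fin d) ℝ) (f : Fin d → ℝ)
    {β : Fin d → ℝ} {p : Matrix (Fin d) (Fin d) ℝ}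
    (hβ : β ∈ simplexS d) (hp : p ∈ couplings β β) (hZ : 0 < Phi C β f) :
    -2*(∑ i, β i * f i) - 2*Real.log (Phi C β f) ≤ OTcost C 2 β β p := by
  obtain ⟨hp0, hrow, hcol, hsupp⟩ := hp
  set Z := Phi C β f with hZdef
  set q : Fin d → Fin d → ℝ :=
    fun i j => β i * β j * Real.exp (-(f i + f j + C i j)/2) / Z with hq
  have hq0 : ∀ i j, 0 ≤ q i j := fun i j => by
    have := hβ.1 i; have := hβ.1 j; positivity
  have hsum_p : ∑ i, ∑ j, p i j = 1 := by
    calc ∑ i, ∑ j, p i j = ∑ i, β i := Finset.sum_congr rfl fun i _ => hrow i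
      _ = 1 := hβ.2
  have hsum_q : ∑ i, ∑ j, q i j = 1 := by
    simp only [hq, ← Finset.sum_div]
    rw [div_eq_one_iff_eq hZ.ne']
    rfl
  have key : ∀ i j, p i j * (-(f i) - f j) - 2*(p i j * Real.log Z) + 2*(p i j - q i j)
      ≤ p i j * C i j + 2 * (p i j * Real.log (p i j / (β i * β j))) := by
    intro i j
    rcases eq_or_lt_of_le (hp0 i j) with h0 | hpij
    · rw [← h0]
      simp only [zero_mul, mul_zero, zero_sub, sub_zero, zero_add, add_zero, zero_div,
        Real.log_zero]
      nlinarith [hq0 i j]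
    · have hbb : 0 < β i * β j := by
        rcases lt_or_eq_of_le (mul_nonneg (hβ.1 i) (hβ.1 j)) with h | h
        · exact h
        · exact absurd (hsupp i j h.symm) (ne_of_gt hpij)
      have hw : 0 < Real.exp (-(f i + f j + C i j)/2) := Real.exp_pos _
      have hqpos : 0 < q i j := div_pos (mul_pos hbb hw) hZ
      have hlogq : Real.log (q i j) =
          Real.log (β i * β j) + (-(f i + f j + C i j)/2) - Real.log Z := by
        rw [hq]
        rw [Real.log_div (mul_ne_zero hbb.ne' hw.ne') hZ.ne',
          Real.log_mul hbb.ne' hw.ne', Real.log_exp]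
      have hlog : Real.log (p i j / (β i * β j)) =
          Real.log (p i j / q i j) + (-(f i + f j + C i j)/2 - Real.log Z) := by
        rw [Real.log_div hpij.ne' hbb.ne', Real.log_div hpij.ne' hqpos.ne', hlogq]
        ring
      have hgibbs : p i j - q i j ≤ p i j * Real.log (p i j / q i j) := by
        have h1 : Real.log (q i j / p i j) ≤ q i j / p i j - 1 :=
          Real.log_le_sub_one_of_pos (div_pos hqpos hpij)
        have h2 : Real.log (p i j / q i j) = - Real.log (q i j / p i j) := by
          rw [← Real.log_inv]
          congr 1
          rw [inv_div]
        rw [h2]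
        have h3 := mul_le_mul_of_nonneg_left h1 hpij.le
        have h4 : p i j * (q i j / p i j - 1) = q i j - p i j := by
          field_simp
        nlinarith
      rw [hlog]
      nlinarith
  have hsum := Finset.sum_le_sum fun i (_ : i ∈ Finset.univ) =>
    Finset.sum_le_sum fun j (_ : j ∈ Finset.univ) => key i j
  have hRHS : ∑ i, ∑ j, (p i j * C i j + 2 * (p i j * Real.log (p i j / (β i * β j))))
      = OTcost C 2 β β p := by
    unfold OTcost
    simp only [Finset.sum_add_distrib, Finset.mul_sum]
  have hL1 : ∑ i, ∑ j, p i j * (-(f i) - f j) = -2*(∑ i, β i * f i) := by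
    have e1 : ∀ i, ∑ j, p i j * (-(f i) - f j)
        = β i * (-(f i)) - ∑ j, p i j * f j := by
      intro i
      have : ∀ j, p i j * (-(f i) - f j) = p i j * (-(f i)) - p i j * f j :=
        fun j => by ring
      simp only [this, Finset.sum_sub_distrib, ← Finset.sum_mul, hrow i]
    simp only [e1, Finset.sum_sub_distrib]
    rw [Finset.sum_comm]
    have e2 : ∀ j, ∑ i, p i j * f j = β j * f j := by
      intro j
      rw [← Finset.sum_mul, hcol j]
    simp only [e2]
    have e3 : ∑ i, β i * (-(f i)) = -(∑ i, β i * f i) := by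
      rw [← Finset.sum_neg_distrib]
      exact Finset.sum_congr rfl fun i _ => by ring
    rw [e3]
    ring
  have hL2 : ∑ i, ∑ j, p i j * Real.log Z = Real.log Z := by
    have : ∀ i, ∑ j, p i j * Real.log Z = β i * Real.log Z := by
      intro i; rw [← Finset.sum_mul, hrow i]
    simp only [this, ← Finset.sum_mul, hβ.2, one_mul]
  have hLHS : ∑ i, ∑ j, (p i j * (-(f i) - f j) - 2*(p i j * Real.log Z) + 2*(p i j - q i j))
      = -2*(∑ i, β i * f i) - 2*Real.log Z := by
    simp only [Finset.sum_add_distrib, Finset.sum_sub_distrib, ← Finset.mul_sum]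
    rw [hL1, hL2, hsum_p, hsum_q]
    ring
  rw [hLHS, hRHS] at hsum
  exact hsum

lemma qf_prod_pos {d : ℕ} (C : Matrix (Fin d) (Fin d) ℝ) (hCdiag : ∀ i, C i i = 0)
    {β v : Fin d → ℝ} (hβ : β ∈ simplexS d) (hv : ∀ i, 0 < v i) :
    0 < QF C (fun l => β l * v l) := by
  obtain ⟨i0, hi0⟩ := simplex_exists_pos hβ
  have h := qf_diag_le C hCdiag (y := fun l => β l * v l)
    (fun l => mul_nonneg (hβ.1 l) (hv l).le) i0
  have : 0 < (β i0 * v i0) ^ 2 := by have := hv i0; positivity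
  linarith

lemma otcost_upper_aux {d : ℕ} {C : Matrix (Fin d) (Fin d) ℝ} (hCsym : C.IsSymm)
    (hCdiag : ∀ i, C i i = 0) {β v : Fin d → ℝ} (hβ : β ∈ simplexS d) (hv : ∀ i, 0 < v i)
    (hstat : ∀ i, β i * v i * (∑ j, β j * v j * Real.exp (-(C i j)/2)) =
      β i * QF C (fun l => β l * v l)) :
    ∃ p ∈ couplings β β, OTcost C 2 β β p
      = 4 * (∑ i, β i * Real.log (v i)) - 2 * Real.log (QF C (fun l => β l * v l)) := by
  classical
  have hk : ∀ i j, Real.exp (-(C i j)/2) = Real.exp (-(C j i)/2) := fun i j => by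
    rw [hCsym.apply j i]
  set Q := QF C (fun l => β l * v l) with hQdef
  have hQpos : 0 < Q := qf_prod_pos C hCdiag hβ hv
  have hβ0 : ∀ i, ¬ 0 < β i → β i = 0 := fun i hbi => le_antisymm (not_lt.1 hbi) (hβ.1 i)
  set p : Matrix (Fin d) (Fin d) ℝ :=
    Matrix.of fun i j => (β i * v i) * (β j * v j) * Real.exp (-(C i j)/2) / Q with hpdef
  have hp0 : ∀ i j, 0 ≤ p i j := fun i j => by
    have h1 := hβ.1 i; have h2 := hβ.1 j; have h3 := (hv i).le; have h4 := (hv j).le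
    have : (0:ℝ) < Real.exp (-(C i j)/2) := Real.exp_pos _
    simp only [hpdef, Matrix.of_apply]
    positivity
  have hrow : ∀ i, ∑ j, p i j = β i := by
    intro i
    simp only [hpdef, Matrix.of_apply]
    rw [← Finset.sum_div]
    have e : ∑ j, β i * v i * (β j * v j) * Real.exp (-(C i j)/2)
        = β i * v i * ∑ j, β j * v j * Real.exp (-(C i j)/2) := by
      rw [Finset.mul_sum]
      exact Finset.sum_congr rfl fun j _ => by ring
    rw [e, hstat i, mul_div_assoc, div_self hQpos.ne', mul_one]
  have hcol : ∀ j, ∑ i, p i j = β j := by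
    intro j
    simp only [hpdef, Matrix.of_apply]
    rw [← Finset.sum_div]
    have e : ∑ i, β i * v i * (β j * v j) * Real.exp (-(C i j)/2)
        = β j * v j * ∑ i, β i * v i * Real.exp (-(C j i)/2) := by
      rw [Finset.mul_sum]
      refine Finset.sum_congr rfl fun i _ => ?_
      rw [hk i j]
      ring
    rw [e, hstat j, mul_div_assoc, div_self hQpos.ne', mul_one]
  have hsupp : ∀ i j, β i * β j = 0 → p i j = 0 := by
    intro i j h
    rcases mul_eq_zero.1 h with h | h <;> simp [hpdef, h]
  have hsum_p : ∑ i, ∑ j, p i j = 1 := by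
    calc ∑ i, ∑ j, p i j = ∑ i, β i := Finset.sum_congr rfl fun i _ => hrow i
      _ = 1 := hβ.2
  refine ⟨p, ⟨hp0, hrow, hcol, hsupp⟩, ?_⟩
  have key : ∀ i j, p i j * C i j + 2 * (p i j * Real.log (p i j / (β i * β j)))
      = 2 * (p i j * (Real.log (v i) + Real.log (v j))) - 2 * (p i j * Real.log Q) := by
    intro i j
    by_cases hbi : 0 < β i
    · by_cases hbj : 0 < β j
      · have hppos : 0 < p i j := by
          simp only [hpdef, Matrix.of_apply]
          have : (0:ℝ) < Real.exp (-(C i j)/2) := Real.exp_pos _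
          have := hv i; have := hv j
          positivity
        have hval : p i j / (β i * β j) = v i * v j * Real.exp (-(C i j)/2) / Q := by
          simp only [hpdef, Matrix.of_apply]
          field_simp
        have hvi := hv i
        have hvj := hv j
        have hlog : Real.log (p i j / (β i * β j))
            = Real.log (v i) + Real.log (v j) + (-(C i j)/2) - Real.log Q := by
          rw [hval, Real.log_div (by positivity) hQpos.ne',
            Real.log_mul (by positivity) (Real.exp_ne_zero _),
            Real.log_mul (hv i).ne' (hv j).ne', Real.log_exp]
        rw [hlog]
        ring
      · have : p i j = 0 := hsupp i j (by rw [hβ0 j hbj]; ring)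
        simp [this]
    · have : p i j = 0 := hsupp i j (by rw [hβ0 i hbi]; ring)
      simp [this]
  have hOTsplit : OTcost C 2 β β p
      = ∑ i, ∑ j, (p i j * C i j + 2 * (p i j * Real.log (p i j / (β i * β j)))) := by
    unfold OTcost
    simp only [Finset.sum_add_distrib, Finset.mul_sum]
  rw [hOTsplit]
  have hRHS : ∑ i, ∑ j, (2 * (p i j * (Real.log (v i) + Real.log (v j)))
      - 2 * (p i j * Real.log Q))
      = 4 * (∑ i, β i * Real.log (v i)) - 2 * Real.log Q := by
    have hA : ∑ i, ∑ j, p i j * Real.log (v i) = ∑ i, β i * Real.log (v i) := by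
      refine Finset.sum_congr rfl fun i _ => ?_
      rw [← Finset.sum_mul, hrow i]
    have hB : ∑ i, ∑ j, p i j * Real.log (v j) = ∑ i, β i * Real.log (v i) := by
      rw [Finset.sum_comm]
      refine Finset.sum_congr rfl fun j _ => ?_
      rw [← Finset.sum_mul, hcol j]
    have hC : ∑ i, ∑ j, p i j * Real.log Q = Real.log Q := by
      have e : ∀ i, ∑ j, p i j * Real.log Q = β i * Real.log Q := by
        intro i; rw [← Finset.sum_mul, hrow i]
      simp only [e, ← Finset.sum_mul, hβ.2, one_mul]
    have e2 : ∀ i j, 2 * (p i j * (Real.log (v i) + Real.log (v j)))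
        - 2 * (p i j * Real.log Q)
        = 2 * (p i j * Real.log (v i)) + 2 * (p i j * Real.log (v j))
          - 2 * (p i j * Real.log Q) := fun i j => by ring
    simp only [e2, Finset.sum_sub_distrib, Finset.sum_add_distrib, ← Finset.mul_sum]
    rw [hA, hB, hC]
    ring
  rw [← hRHS]
  exact Finset.sum_congr rfl fun i _ => Finset.sum_congr rfl fun j _ => key i j

/-- When the kernel `K = (exp(-c_{ij}/2))` is positive definite, for every `f ∈ ℝ^d` the
function `α ↦ ⟨α,f⟩ - Ω_C(α)` has a unique maximizer over the simplex, `α ↦ Φ_C(α,f)` has a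
unique minimizer over the simplex, and the two coincide (the geometric softmax of `f`). -/
theorem gsoftmax_unique_max_min_coincide (d : ℕ) (hd : 1 ≤ d)
    (C : Matrix (Fin d) (Fin d) ℝ) (hCsym : C.IsSymm) (hCdiag : ∀ i, C i i = 0)
    (hK : (kernelK C).PosDef) (f : Fin d → ℝ) :
    (∃! α, α ∈ simplexS d ∧
        IsMaxOn (fun β => (∑ i, β i * f i) - Omega C β) (simplexS d) α) ∧
    (∃! α, α ∈ simplexS d ∧ IsMinOn (fun β => Phi C β f) (simplexS d) α) ∧
    ∀ a b : Fin d → ℝ,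
      a ∈ simplexS d → IsMaxOn (fun β => (∑ i, β i * f i) - Omega C β) (simplexS d) a →
      b ∈ simplexS d → IsMinOn (fun β => Phi C β f) (simplexS d) b →
      a = b := by
  classical
  set F : (Fin d → ℝ) → ℝ := fun β => (∑ i, β i * f i) - Omega C β with hFdef
  have hF : ∀ β, F β = (∑ i, β i * f i) + (1/2) * OT C 2 β β := by
    intro β
    simp only [hFdef, Omega]
    ring
  obtain ⟨αs, hαs, hαsmin⟩ := phi_min_exists hd C f
  set m := Phi C αs f with hmdef
  have hm : 0 < m := phi_pos hK hαs f
  have huniq : ∀ b ∈ simplexS d, IsMinOn (fun β => Phi C β f) (simplexS d) b → b = αs :=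
    fun b hb hbmin => phi_min_unique hK f hb hαs hbmin hαsmin
  have hOTlow : ∀ β, β ∈ simplexS d →
      -2*(∑ i, β i * f i) - 2*Real.log (Phi C β f) ≤ OT C 2 β β := by
    intro β hβ
    apply le_csInf ⟨_, Set.mem_image_of_mem _ (couplings_prod hβ)⟩
    rintro y ⟨p, hp, rfl⟩
    exact otcost_lower C f hβ hp (phi_pos hK hβ f)
  have hupper : ∀ β ∈ simplexS d, F β ≤ -Real.log m ∧ (F β = -Real.log m → β = αs) := by
    intro β hβ
    obtain ⟨i0, hi0⟩ := simplex_exists_pos hβ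
    obtain ⟨v, hvpos, hstat⟩ := exists_stationary hCsym hCdiag hβ
    set Q := QF C (fun l => β l * v l) with hQdef
    have hQpos : 0 < Q := qf_prod_pos C hCdiag hβ hvpos
    obtain ⟨p, hp, hcost⟩ := otcost_upper_aux hCsym hCdiag hβ hvpos hstat
    have hOTup : OT C 2 β β ≤ 4 * (∑ i, β i * Real.log (v i)) - 2 * Real.log Q := by
      rw [← hcost]
      apply csInf_le
      · refine ⟨-2*(∑ i, β i * f i) - 2*Real.log (Phi C β f), ?_⟩
        rintro y ⟨p', hp', rfl⟩
        exact otcost_lower C f hβ hp' (phi_pos hK hβ f)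
      · exact Set.mem_image_of_mem _ hp
    set t : Fin d → ℝ := fun i => v i * Real.exp (f i / 2) with htdef
    have ht : ∀ i, 0 < t i := fun i => by
      have := hvpos i
      simp only [htdef]
      positivity
    set E := ∑ i, β i * t i with hEdef
    have hEpos : 0 < E := by
      refine Finset.sum_pos' (fun i _ => mul_nonneg (hβ.1 i) (ht i).le) ⟨i0, Finset.mem_univ _, ?_⟩
      exact mul_pos hi0 (ht i0)
    set γ : Fin d → ℝ := fun i => β i * t i / E with hγdef
    have hγmem : γ ∈ simplexS d := by
      constructor
      · intro i
        exact div_nonneg (mul_nonneg (hβ.1 i) (ht i).le) hEpos.le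
      · simp only [hγdef]
        rw [← Finset.sum_div, ← hEdef, div_self hEpos.ne']
    have hγPhi : Phi C γ f = Q / E^2 := by
      rw [phi_eq_qf]
      have e1 : (fun i => γ i * Real.exp (-(f i)/2)) = fun i => (β i * v i) / E := by
        funext i
        simp only [hγdef, htdef]
        have hexp : Real.exp (f i / 2) * Real.exp (-(f i)/2) = 1 := by
          rw [← Real.exp_add, show f i / 2 + -f i / 2 = 0 from by ring, Real.exp_zero]
        field_simp
        rw [neg_div] at hexp
        linear_combination (β i * v i) * hexp
      rw [e1]
      unfold QF
      rw [hQdef]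
      unfold QF
      rw [Finset.sum_div]
      refine Finset.sum_congr rfl fun i _ => ?_
      rw [Finset.sum_div]
      refine Finset.sum_congr rfl fun j _ => ?_
      dsimp only
      ring
    have hPhiγ_ge : m ≤ Q / E^2 := by
      have h : Phi C αs f ≤ Phi C γ f := hαsmin hγmem
      rw [hγPhi] at h
      exact h
    have hlogQ : Real.log m + 2 * Real.log E ≤ Real.log Q := by
      have h1 : Real.log m ≤ Real.log (Q / E^2) := Real.log_le_log hm hPhiγ_ge
      rw [Real.log_div hQpos.ne' (pow_ne_zero 2 hEpos.ne'), Real.log_pow] at h1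
      push_cast at h1
      linarith
    have hlogt : ∀ i, Real.log (t i) = Real.log (v i) + f i / 2 := by
      intro i
      simp only [htdef]
      rw [Real.log_mul (hvpos i).ne' (Real.exp_ne_zero _), Real.log_exp]
    have hterm : ∀ i, β i * Real.log (t i) ≤ β i * (Real.log E + (t i / E - 1)) := by
      intro i
      have h1 : Real.log (t i / E) ≤ t i / E - 1 :=
        Real.log_le_sub_one_of_pos (div_pos (ht i) hEpos)
      rw [Real.log_div (ht i).ne' hEpos.ne'] at h1
      exact mul_le_mul_of_nonneg_left (by linarith) (hβ.1 i)
    have hsumUB : ∑ i, β i * (Real.log E + (t i / E - 1)) = Real.log E := by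
      have e : ∀ i, β i * (Real.log E + (t i / E - 1))
          = β i * Real.log E + (β i * t i)/E - β i := fun i => by ring
      simp only [e, Finset.sum_sub_distrib, Finset.sum_add_distrib, ← Finset.sum_mul,
        ← Finset.sum_div, hβ.2, ← hEdef, div_self hEpos.ne']
      ring
    have hsumJ : ∑ i, β i * Real.log (t i) ≤ Real.log E := by
      calc ∑ i, β i * Real.log (t i) ≤ ∑ i, β i * (Real.log E + (t i / E - 1)) :=
            Finset.sum_le_sum fun i _ => hterm i
        _ = Real.log E := hsumUB
    have h2 : (∑ i, β i * f i) + 2 * ∑ i, β i * Real.log (v i)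
        = 2 * ∑ i, β i * Real.log (t i) := by
      simp only [hlogt]
      rw [Finset.mul_sum, Finset.mul_sum, ← Finset.sum_add_distrib]
      exact Finset.sum_congr rfl fun i _ => by ring
    have hFle : F β ≤ -Real.log m := by
      rw [hF β]
      linarith
    refine ⟨hFle, fun hFeq => ?_⟩
    rw [hF β] at hFeq
    have e1 : ∑ i, β i * Real.log (t i) = Real.log E := by linarith
    have e2 : Real.log Q = Real.log m + 2 * Real.log E := by linarith
    have hslacksum : ∑ i, (β i * (Real.log E + (t i / E - 1)) - β i * Real.log (t i)) = 0 := by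
      rw [Finset.sum_sub_distrib, hsumUB, e1, sub_self]
    have hslack : ∀ i ∈ Finset.univ,
        β i * (Real.log E + (t i / E - 1)) - β i * Real.log (t i) = 0 :=
      (Finset.sum_eq_zero_iff_of_nonneg fun i _ => sub_nonneg.2 (hterm i)).1 hslacksum
    have hti : ∀ i, 0 < β i → t i = E := by
      intro i hbi
      have h := hslack i (Finset.mem_univ i)
      have h' : β i * ((Real.log E + (t i / E - 1)) - Real.log (t i)) = 0 := by
        ring_nf
        ring_nf at h
        linarith
      have hD : (Real.log E + (t i / E - 1)) - Real.log (t i) = 0 :=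
        (mul_eq_zero.1 h').resolve_left hbi.ne'
      have hlog2 : Real.log (t i / E) = t i / E - 1 := by
        rw [Real.log_div (ht i).ne' hEpos.ne']
        linarith
      by_contra hne
      have hne' : t i / E ≠ 1 := by
        intro hcon
        exact hne ((div_eq_one_iff_eq hEpos.ne').1 hcon)
      have := Real.log_lt_sub_one_of_pos (div_pos (ht i) hEpos) hne'
      linarith
    have hγβ : γ = β := by
      funext i
      by_cases hbi : 0 < β i
      · simp only [hγdef]
        rw [hti i hbi, mul_div_assoc, div_self hEpos.ne', mul_one]
      · have hb0 : β i = 0 := le_antisymm (not_lt.1 hbi) (hβ.1 i)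
        simp [hγdef, hb0]
    have hQval : Q = m * E^2 := by
      have h1 : Real.log Q = Real.log (m * E^2) := by
        rw [Real.log_mul hm.ne' (pow_ne_zero 2 hEpos.ne'), Real.log_pow]
        push_cast
        linarith
      calc Q = Real.exp (Real.log Q) := (Real.exp_log hQpos).symm
        _ = Real.exp (Real.log (m * E^2)) := by rw [h1]
        _ = m * E^2 := Real.exp_log (by positivity)
    have hPhiγ : Phi C γ f = m := by
      rw [hγPhi, hQval, mul_div_assoc, div_self (pow_ne_zero 2 hEpos.ne'), mul_one]
    have hγmin : IsMinOn (fun β => Phi C β f) (simplexS d) γ := by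
      rw [isMinOn_iff]
      intro x hx
      rw [hPhiγ]
      exact hαsmin hx
    rw [← hγβ]
    exact huniq γ hγmem hγmin
  have hFαs_ge : -Real.log m ≤ F αs := by
    rw [hF]
    have := hOTlow αs hαs
    rw [← hmdef] at this
    linarith
  have hFαs : F αs = -Real.log m := le_antisymm ((hupper αs hαs).1) hFαs_ge
  have hmaxαs : IsMaxOn F (simplexS d) αs := by
    rw [isMaxOn_iff]
    intro x hx
    rw [hFαs]
    exact (hupper x hx).1
  have hmaxuniq : ∀ a ∈ simplexS d, IsMaxOn F (simplexS d) a → a = αs := by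
    intro a ha hamax
    have h1 : F αs ≤ F a := (isMaxOn_iff.1 hamax) αs hαs
    have h2 : F a ≤ -Real.log m := (hupper a ha).1
    exact (hupper a ha).2 (le_antisymm h2 (by rw [← hFαs]; exact h1))
  refine ⟨⟨αs, ⟨hαs, hmaxαs⟩, fun a ⟨ha, hamax⟩ => hmaxuniq a ha hamax⟩,
    ⟨αs, ⟨hαs, hαsmin⟩, fun b ⟨hb, hbmin⟩ => huniq b hb hbmin⟩,
    fun a b ha hamax hb hbmin => ?_⟩
  rw [hmaxuniq a ha hamax, huniq b hb hbmin]
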